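/- Let n = 2m be even and k a field of characteristic 2. Then the Lie algebra N_1(n,k) is simple: every nonzero ideal equals the whole algebra. -/

import Mathlib

/-- Parity `|α|` of the coordinate sum of `α ∈ GF(2)^n`. -/
def par {n : ℕ} (α : Fin n → ZMod 2) : ZMod 2 := ∑ i, α i

/-- Standard inner product `(α, β)` on `GF(2)^n`. -/
def dotp {n : ℕ} (α β : Fin n → ZMod 2) : ZMod 2 := ∑ i, α i * β i

/-- Structure constant of `N₁(n,k)` on `e_{α+β}`: equal to `1` if `|α| = |β| = 1`,
and to `(α,β)` if `|α| = 0` or `|β| = 0`. -/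
noncomputable def cN1 (k : Type*) [Field k] {n : ℕ} (α β : Fin n → ZMod 2) : k :=
  if par α = 1 ∧ par β = 1 then 1 else if dotp α β = 1 then 1 else 0

/-- The bracket of `N₁(n,k)`, defined on the free `k`-module with basis
`{e_α : α ∈ GF(2)^n \ {0}}` (realized as finitely supported functions), extended
bilinearly from `⁅e_α, e_β⁆ = cN1 α β • e_{α+β}` (and `0` when `α + β = 0`). -/
noncomputable def brN1 {k : Type*} [Field k] {n : ℕ}
    (f g : {v : Fin n → ZMod 2 // v ≠ 0} →₀ k) :
    {v : Fin n → ZMod 2 // v ≠ 0} →₀ k :=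
  f.sum fun α a => g.sum fun β b =>
    if h : α.1 + β.1 ≠ 0 then
      Finsupp.single ⟨α.1 + β.1, h⟩ (a * b * cN1 k α.1 β.1)
    else 0

/-- The basis vector `e_α` of `N₁(n,k)`. -/
noncomputable def eN1 (k : Type*) [Field k] {n : ℕ} (α : Fin n → ZMod 2) (h : α ≠ 0) :
    {v : Fin n → ZMod 2 // v ≠ 0} →₀ k :=
  Finsupp.single ⟨α, h⟩ 1

lemma zmod2_cases : ∀ a : ZMod 2, a = 0 ∨ a = 1 := by decide
lemma zmod2_add_self : ∀ a : ZMod 2, a + a = 0 := by decide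

section basics
variable {n : ℕ}

/-- standard basis vector -/
def sv (i : Fin n) : Fin n → ZMod 2 := fun j => if j = i then 1 else 0

lemma par_sv (i : Fin n) : par (sv i) = 1 := by
  simp [par, sv]

lemma dotp_sv_left (i : Fin n) (q : Fin n → ZMod 2) : dotp (sv i) q = q i := by
  simp [dotp, sv, ite_mul]

lemma dotp_sv_right (i : Fin n) (q : Fin n → ZMod 2) : dotp q (sv i) = q i := by
  simp [dotp, sv, mul_ite]

lemma par_add (a b : Fin n → ZMod 2) : par (a + b) = par a + par b := by
  simp [par, Finset.sum_add_distrib]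

lemma dotp_add_right (a b c : Fin n → ZMod 2) : dotp a (b + c) = dotp a b + dotp a c := by
  simp [dotp, mul_add, Finset.sum_add_distrib]

lemma par_zero : par (0 : Fin n → ZMod 2) = 0 := by simp [par]

lemma add_self_vec (a : Fin n → ZMod 2) : a + a = 0 := by
  funext j; exact zmod2_add_self (a j)

lemma add_add_cancel_vec (a b : Fin n → ZMod 2) : a + (a + b) = b := by
  rw [← add_assoc, add_self_vec, zero_add]

lemma vec_add_cancel_right (a b : Fin n → ZMod 2) : (a + b) + b = a := by
  rw [add_assoc, add_self_vec, add_zero]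

end basics


section br
variable {k : Type*} [Field k] {n : ℕ}

abbrev V (n : ℕ) := {v : Fin n → ZMod 2 // v ≠ 0}

lemma br_single_single (p q : V n) (a b : k) :
    brN1 (Finsupp.single p a) (Finsupp.single q b) =
      if h : p.1 + q.1 ≠ 0 then Finsupp.single ⟨p.1 + q.1, h⟩ (a * b * cN1 k p.1 q.1)
      else 0 := by
  unfold brN1
  rw [Finsupp.sum_single_index, Finsupp.sum_single_index]
  · split <;> simp
  · rw [Finsupp.sum_single_index] <;> split <;> simp

lemma brN1_zero_right (f : V n →₀ k) : brN1 f 0 = 0 := by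
  unfold brN1
  simp [Finsupp.sum_zero_index]

lemma brN1_add_right (f g g' : V n →₀ k) :
    brN1 f (g + g') = brN1 f g + brN1 f g' := by
  unfold brN1
  rw [← Finsupp.sum_add]
  refine Finsupp.sum_congr fun α _ => ?_
  rw [Finsupp.sum_add_index']
  · intro β; split <;> simp
  · intro β b b'; split <;> simp [mul_add, add_mul, Finsupp.single_add]

lemma brN1_smul_right (c : k) (f g : V n →₀ k) :
    brN1 f (c • g) = c • brN1 f g := by
  unfold brN1
  rw [Finsupp.smul_sum]
  refine Finsupp.sum_congr fun α a => ?_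
  rw [Finsupp.sum_smul_index', Finsupp.smul_sum]
  · refine Finsupp.sum_congr fun β b => ?_
    split
    · rw [Finsupp.smul_single]; congr 1; simp only [smul_eq_mul]; ring
    · simp
  · intro β; split <;> simp

end br

section toral
variable {k : Type*} [Field k] {n : ℕ}

/-- cast `ZMod 2 → k` -/
noncomputable def e2k (k : Type*) [Field k] (t : ZMod 2) : k := if t = 1 then 1 else 0

/-- eigenvalue of `t_i` on `e_p` -/
def lam {n : ℕ} (p : Fin n → ZMod 2) (i : Fin n) : ZMod 2 := p i + par p

lemma sv_ne_zero (i : Fin n) : sv i ≠ 0 := by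
  intro h
  have := congrArg par h
  rw [par_sv, par_zero] at this
  exact one_ne_zero this

lemma cN1_toral (i : Fin n) (p : Fin n → ZMod 2) :
    cN1 k (sv i) p * cN1 k (sv i) (sv i + p) = e2k k (lam p i) := by
  have hsv := par_sv (n := n) i
  rcases zmod2_cases (par p) with hp | hp <;>
    rcases zmod2_cases (p i) with hpi | hpi <;>
      simp [cN1, e2k, lam, hsv, hp, hpi, par_add, dotp_sv_left, sv]

/-- basis vector e_{sv i} -/
noncomputable def te (k : Type*) [Field k] {n : ℕ} (i : Fin n) : V n →₀ k :=
  Finsupp.single ⟨sv i, sv_ne_zero i⟩ 1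

lemma toral_single (i : Fin n) (p : V n) (b : k) :
    brN1 (te k i) (brN1 (te k i) (Finsupp.single p b)) =
      e2k k (lam p.1 i) • Finsupp.single p b := by
  unfold te
  rw [br_single_single]
  by_cases hps : p.1 = sv i
  · have h0 : sv i + p.1 = 0 := by rw [hps, add_self_vec]
    rw [dif_neg (by simpa using h0), brN1_zero_right]
    have : lam p.1 i = 0 := by
      rw [hps]; simp [lam, par_sv, sv, zmod2_add_self]
    rw [this]
    simp [e2k]
  · have h1 : sv i + p.1 ≠ 0 := by
      intro h
      apply hps
      have := congrArg (fun v => sv i + v) h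
      simpa [add_add_cancel_vec] using this
    rw [dif_pos h1, br_single_single]
    have h2 : sv i + (sv i + p.1) = p.1 := add_add_cancel_vec _ _
    have h2' : sv i + (sv i + p.1) ≠ 0 := by rw [h2]; exact p.2
    rw [dif_pos h2']
    have hidx : (⟨sv i + (sv i + p.1), h2'⟩ : V n) = p := Subtype.ext h2
    rw [hidx, Finsupp.smul_single]
    congr 1
    show 1 * (1 * b * cN1 k (sv i) p.1) * cN1 k (sv i) (sv i + p.1) = e2k k (lam p.1 i) • b
    rw [smul_eq_mul, ← cN1_toral i p.1]
    ring

lemma toral_apply (i : Fin n) (x : V n →₀ k) (q : V n) :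
    (brN1 (te k i) (brN1 (te k i) x)) q = e2k k (lam q.1 i) * x q := by
  induction x using Finsupp.induction with
  | zero => simp [brN1_zero_right]
  | single_add p b f hpf hb ih =>
    rw [brN1_add_right, brN1_add_right, Finsupp.add_apply, ih, toral_single,
      Finsupp.add_apply, mul_add]
    congr 1
    rw [Finsupp.smul_apply, smul_eq_mul]
    by_cases hq : q = p
    · subst hq; rfl
    · rw [Finsupp.single_apply, if_neg (by exact fun h => hq h.symm), mul_zero, mul_zero]

end toral

section extract
variable {k : Type*} [Field k] {n m : ℕ}

lemma sum_lam (p : Fin n → ZMod 2) (hn : n = 2 * m) : ∑ i, lam p i = par p := by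
  have h1 : ∑ i : Fin n, lam p i = par p + n • par p := by
    simp [lam, par, Finset.sum_add_distrib]
  have hz : ∀ c : ZMod 2, n • c = 0 := by
    intro c
    rw [hn, mul_smul, two_nsmul, zmod2_add_self]
  rw [h1, hz, add_zero]

lemma lam_inj (hn : n = 2 * m) {p q : Fin n → ZMod 2} (h : ∀ i, lam p i = lam q i) :
    p = q := by
  have hpar : par p = par q := by
    rw [← sum_lam p hn, ← sum_lam q hn]
    exact Finset.sum_congr rfl fun i _ => h i
  funext i
  have := h i
  rw [lam, lam, hpar] at this
  exact add_right_cancel this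

lemma extract (hn : n = 2 * m) (hchar : CharP k 2)
    (I : Submodule k (V n →₀ k))
    (hI : ∀ x : V n →₀ k, ∀ y ∈ I, brN1 x y ∈ I)
    (x : V n →₀ k) (hx : x ∈ I) (hx0 : x ≠ 0) :
    ∃ p : V n, Finsupp.single p (1 : k) ∈ I := by
  haveI := hchar
  obtain ⟨β₀, hβ₀⟩ := Finsupp.support_nonempty_iff.mpr hx0
  have hβ : x β₀ ≠ 0 := Finsupp.mem_support_iff.mp hβ₀
  have key : ∀ s : Finset (Fin n), ∃ y ∈ I, ∀ q : V n,
      y q = (∏ i ∈ s, (e2k k (lam q.1 i) + 1 + e2k k (lam β₀.1 i))) * x q := by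
    intro s
    induction s using Finset.induction with
    | empty => exact ⟨x, hx, by simp⟩
    | @insert i s hi ih =>
      obtain ⟨y, hyI, hy⟩ := ih
      refine ⟨brN1 (te k i) (brN1 (te k i) y) + (1 + e2k k (lam β₀.1 i)) • y, ?_, ?_⟩
      · exact add_mem (hI _ _ (hI _ _ hyI)) (Submodule.smul_mem _ _ hyI)
      · intro q
        rw [Finsupp.add_apply, Finsupp.smul_apply, toral_apply, hy q, smul_eq_mul,
          Finset.prod_insert hi]
        ring
  obtain ⟨y, hyI, hy⟩ := key Finset.univ
  have h2k : (1 : k) + 1 = 0 := CharTwo.add_self_eq_zero 1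
  have hfac1 : ∀ a : ZMod 2, e2k k a + 1 + e2k k a = 1 := by
    intro a
    have : e2k k a + 1 + e2k k a = (e2k k a + e2k k a) + 1 := by ring
    rw [this, CharTwo.add_self_eq_zero, zero_add]
  have hfac0 : ∀ a b : ZMod 2, a ≠ b → e2k k a + 1 + e2k k b = 0 := by
    intro a b hab
    rcases zmod2_cases a with ha | ha <;> rcases zmod2_cases b with hb | hb <;>
      subst ha <;> subst hb <;> simp_all [e2k]
  have hyβ : y β₀ = x β₀ := by
    rw [hy β₀, Finset.prod_congr rfl fun i _ => hfac1 (lam β₀.1 i), Finset.prod_const_one,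
      one_mul]
  have hq0 : ∀ q : V n, q ≠ β₀ → y q = 0 := by
    intro q hq
    have : ∃ i, lam q.1 i ≠ lam β₀.1 i := by
      by_contra hcon
      push_neg at hcon
      exact hq (Subtype.ext (lam_inj hn hcon))
    obtain ⟨i, hi⟩ := this
    rw [hy q, Finset.prod_eq_zero (Finset.mem_univ i) (hfac0 _ _ hi), zero_mul]
  refine ⟨β₀, ?_⟩
  have heq : Finsupp.single β₀ (1 : k) = (x β₀)⁻¹ • y := by
    ext q
    rw [Finsupp.smul_apply, smul_eq_mul]
    by_cases hq : q = β₀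
    · subst hq
      rw [hyβ, inv_mul_cancel₀ hβ, Finsupp.single_eq_same]
    · rw [hq0 q hq, mul_zero, Finsupp.single_apply, if_neg (fun h => hq h.symm)]
  rw [heq]
  exact Submodule.smul_mem _ _ hyI

end extract

section connect
variable {k : Type*} [Field k] {n m : ℕ}

lemma exists_one {β : Fin n → ZMod 2} (hβ : β ≠ 0) : ∃ i, β i = 1 := by
  by_contra h
  push_neg at h
  apply hβ
  funext i
  rcases zmod2_cases (β i) with h0 | h1
  · exact h0
  · exact absurd h1 (h i)

lemma natcast_n_eq_zero (hn : n = 2 * m) : ((n : ℕ) : ZMod 2) = 0 := by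
  rw [hn]
  push_cast
  rw [show ((2 : ZMod 2)) = 0 from rfl, zero_mul]

lemma exists_zero (hn : n = 2 * m) {β : Fin n → ZMod 2} (hβ : par β = 1) :
    ∃ j, β j = 0 := by
  by_contra h
  push_neg at h
  have hall : ∀ j, β j = 1 := by
    intro j
    rcases zmod2_cases (β j) with h0 | h1
    · exact absurd h0 (h j)
    · exact h1
  have : par β = 0 := by
    rw [par, Finset.sum_congr rfl fun j _ => hall j, Finset.sum_const, Finset.card_univ,
      Fintype.card_fin, nsmul_eq_mul, mul_one, natcast_n_eq_zero hn]
  rw [this] at hβ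
  exact absurd hβ (by decide)

lemma step (I : Submodule k (V n →₀ k))
    (hI : ∀ x : V n →₀ k, ∀ y ∈ I, brN1 x y ∈ I)
    {β δ : Fin n → ZMod 2} (hβ : β ≠ 0) (hδ : δ ≠ 0)
    (hmem : Finsupp.single (⟨β, hβ⟩ : V n) (1 : k) ∈ I)
    (hc : cN1 k δ β = 1) (h : δ + β ≠ 0) :
    Finsupp.single (⟨δ + β, h⟩ : V n) (1 : k) ∈ I := by
  have := hI (Finsupp.single (⟨δ, hδ⟩ : V n) 1) _ hmem
  rw [br_single_single, dif_pos h] at this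
  simpa [hc] using this

lemma all_singles (hn : n = 2 * m)
    (I : Submodule k (V n →₀ k))
    (hI : ∀ x : V n →₀ k, ∀ y ∈ I, brN1 x y ∈ I)
    (p₀ : V n) (hp₀ : Finsupp.single p₀ (1 : k) ∈ I) :
    ∀ p : V n, Finsupp.single p (1 : k) ∈ I := by
  -- helper to transport along equality of underlying vectors
  have tr : ∀ {p q : V n}, p.1 = q.1 → Finsupp.single p (1 : k) ∈ I →
      Finsupp.single q (1 : k) ∈ I := by
    intro p q h hp
    have : p = q := Subtype.ext h
    rwa [this] at hp
  -- Step 1: get a parity-one basis vector in I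
  have step1 : ∃ γ : Fin n → ZMod 2, ∃ hγ : γ ≠ 0, par γ = 1 ∧
      Finsupp.single (⟨γ, hγ⟩ : V n) (1 : k) ∈ I := by
    rcases zmod2_cases (par p₀.1) with hp | hp
    · obtain ⟨i, hi⟩ := exists_one p₀.2
      have hc : cN1 k (sv i) p₀.1 = 1 := by
        simp [cN1, par_sv, hp, dotp_sv_left, hi]
      have hpar : par (sv i + p₀.1) = 1 := by
        rw [par_add, par_sv, hp, add_zero]
      have hne : sv i + p₀.1 ≠ 0 := fun h => by
        rw [h, par_zero] at hpar; exact absurd hpar (by decide)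
      exact ⟨sv i + p₀.1, hne, hpar,
        step I hI p₀.2 (sv_ne_zero i) (tr rfl hp₀) hc hne⟩
    · exact ⟨p₀.1, p₀.2, hp, tr rfl hp₀⟩
  obtain ⟨γ, hγ0, hγ1, hγI⟩ := step1
  -- Step 2: all parity-zero basis vectors are in I
  have step2 : ∀ (μ : Fin n → ZMod 2) (hμ0 : μ ≠ 0), par μ = 0 →
      Finsupp.single (⟨μ, hμ0⟩ : V n) (1 : k) ∈ I := by
    intro μ hμ0 hμ
    have hδpar : par (μ + γ) = 1 := by rw [par_add, hμ, hγ1, zero_add]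
    have hδ0 : μ + γ ≠ 0 := fun h => by
      rw [h, par_zero] at hδpar; exact absurd hδpar (by decide)
    have hc : cN1 k (μ + γ) γ = 1 := by simp [cN1, hδpar, hγ1]
    have hfin : (μ + γ) + γ ≠ 0 := by rw [vec_add_cancel_right]; exact hμ0
    have := step I hI hγ0 hδ0 hγI hc hfin
    exact tr (vec_add_cancel_right μ γ) this
  -- Step 3: all parity-one basis vectors are in I
  have step3 : ∀ (β : Fin n → ZMod 2) (hβ0 : β ≠ 0), par β = 1 →
      Finsupp.single (⟨β, hβ0⟩ : V n) (1 : k) ∈ I := by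
    intro β hβ0 hβ1
    obtain ⟨i, hi⟩ := exists_one hβ0
    obtain ⟨j, hj⟩ := exists_zero hn hβ1
    have hij : i ≠ j := fun h => by rw [h, hj] at hi; exact absurd hi (by decide)
    set μ := sv i + sv j with hμdef
    have hμpar : par μ = 0 := by
      rw [hμdef, par_add, par_sv, par_sv]; decide
    have hμi : μ i = 1 := by simp [hμdef, sv, hij]
    have hμj : μ j = 1 := by simp [hμdef, sv, hij, Ne.symm hij]
    have hμ0 : μ ≠ 0 := by
      intro h
      have h1 := congrFun h i
      rw [hμi, Pi.zero_apply] at h1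
      exact absurd h1 (by decide)
    have hμI := step2 μ hμ0 hμpar
    have hδpar : par (β + μ) = 1 := by rw [par_add, hβ1, hμpar, add_zero]
    have hδ0 : β + μ ≠ 0 := fun h => by
      rw [h, par_zero] at hδpar; exact absurd hδpar (by decide)
    have hdot : dotp (β + μ) μ = 1 := by
      rw [hμdef, dotp_add_right, dotp_sv_right, dotp_sv_right, ← hμdef,
        Pi.add_apply, Pi.add_apply, hi, hj, hμi, hμj]
      decide
    have hc : cN1 k (β + μ) μ = 1 := by
      simp [cN1, hμpar, hdot]
    have hfin : (β + μ) + μ ≠ 0 := by rw [vec_add_cancel_right]; exact hβ0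
    have := step I hI hμ0 hδ0 hμI hc hfin
    exact tr (vec_add_cancel_right β μ) this
  intro p
  rcases zmod2_cases (par p.1) with hp | hp
  · exact tr rfl (step2 p.1 p.2 hp)
  · exact tr rfl (step3 p.1 p.2 hp)

end connect


/-- For `n = 2m` even and `k` a field of characteristic 2, the Lie
algebra `N₁(n,k)` is simple: every nonzero ideal is the whole algebra. -/
theorem N1_simple_even {m n : ℕ} (hn : n = 2 * m)
    {k : Type*} [Field k] (hchar : CharP k 2)
    (I : Submodule k ({v : Fin n → ZMod 2 // v ≠ 0} →₀ k))
    (hI : ∀ x : {v : Fin n → ZMod 2 // v ≠ 0} →₀ k, ∀ y ∈ I, brN1 x y ∈ I)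
    (hne : I ≠ ⊥) : I = ⊤ := by
  obtain ⟨x, hxI, hx0⟩ := (Submodule.ne_bot_iff I).mp hne
  obtain ⟨p₀, hp₀⟩ := extract hn hchar I hI x hxI hx0
  have hall := all_singles hn I hI p₀ hp₀
  rw [eq_top_iff]
  rintro y -
  induction y using Finsupp.induction with
  | zero => exact zero_mem I
  | single_add p b f hpf hb ih =>
    refine add_mem ?_ ih
    have := Submodule.smul_mem I b (hall p)
    rwa [Finsupp.smul_single, smul_eq_mul, mul_one] at this
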